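/- Let Π be a finite nonempty set, let 𝒪 be a measurable space, and let r : 𝒪 → ℝ be a bounded measurable reward function. Call a map from Π to probability measures on 𝒪 a model, with f^M(π) := ∫ r dM(π) and π_M a maximizer of f^M over Π. Let 𝔐 be a nonempty set of models, let M̄ be any model, fix γ > 0, and set ℓ_M(π) := f^M(π_M) − f^M(π) − γ·D_H²(M(π), M̄(π)). Then inf_{p} sup_{M ∈ 𝔐} ∑_{π ∈ Π} p(π)·ℓ_M(π) = sup_{μ} inf_{p} ∑_{π ∈ Π} p(π)·E_{M∼μ}[ℓ_M(π)], where p ranges over all probability distributions on the finite set Π and μ ranges over all finitely supported probability distributions on 𝔐. -/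

import Mathlib

open MeasureTheory

noncomputable def sqHellinger {α : Type*} [MeasurableSpace α] (P Q : Measure α) : ℝ :=
  ∫ x, (Real.sqrt ((P.rnDeriv (P + Q)) x).toReal
      - Real.sqrt ((Q.rnDeriv (P + Q)) x).toReal) ^ 2 ∂(P + Q)

structure FinDist (X : Type*) where
  support : Finset X
  w : X → ℝ
  nonneg : ∀ x, 0 ≤ w x
  zero_of_not_mem : ∀ x ∉ support, w x = 0
  sum_eq_one : ∑ x ∈ support, w x = 1

noncomputable def meanReward {X O : Type*} [MeasurableSpace O]
    (r : O → ℝ) (M : X → Measure O) (x : X) : ℝ :=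
  ∫ o, r o ∂(M x)

/-! ### Helper lemmas -/

lemma sqHellinger_nonneg {α : Type*} [MeasurableSpace α] (P Q : Measure α) :
    0 ≤ sqHellinger P Q :=
  integral_nonneg fun _ => sq_nonneg _

lemma sqHellinger_le_two {α : Type*} [MeasurableSpace α] (P Q : Measure α)
    [IsProbabilityMeasure P] [IsProbabilityMeasure Q] : sqHellinger P Q ≤ 2 := by
  set ν := P + Q with hν
  have hP : P ≪ ν := Measure.absolutelyContinuous_of_le (Measure.le_add_right le_rfl)
  have hQ : Q ≪ ν := Measure.absolutelyContinuous_of_le (Measure.le_add_left le_rfl)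
  have hPi : Integrable (fun x => (P.rnDeriv ν x).toReal) ν :=
    Measure.integrable_toReal_rnDeriv
  have hQi : Integrable (fun x => (Q.rnDeriv ν x).toReal) ν :=
    Measure.integrable_toReal_rnDeriv
  have hgi : Integrable (fun x => (P.rnDeriv ν x).toReal + (Q.rnDeriv ν x).toReal) ν :=
    hPi.add hQi
  have hle : ∀ x, (Real.sqrt (P.rnDeriv ν x).toReal - Real.sqrt (Q.rnDeriv ν x).toReal) ^ 2
      ≤ (P.rnDeriv ν x).toReal + (Q.rnDeriv ν x).toReal := by
    intro x
    have ha : (0:ℝ) ≤ (P.rnDeriv ν x).toReal := ENNReal.toReal_nonneg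
    have hb : (0:ℝ) ≤ (Q.rnDeriv ν x).toReal := ENNReal.toReal_nonneg
    nlinarith [Real.sq_sqrt ha, Real.sq_sqrt hb,
      mul_nonneg (Real.sqrt_nonneg (P.rnDeriv ν x).toReal)
        (Real.sqrt_nonneg (Q.rnDeriv ν x).toReal)]
  have hfm : AEStronglyMeasurable
      (fun x => (Real.sqrt (P.rnDeriv ν x).toReal - Real.sqrt (Q.rnDeriv ν x).toReal) ^ 2) ν := by
    apply Measurable.aestronglyMeasurable
    exact (((Measure.measurable_rnDeriv P ν).ennreal_toReal.sqrt.sub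
      (Measure.measurable_rnDeriv Q ν).ennreal_toReal.sqrt).pow_const 2)
  have hfi : Integrable
      (fun x => (Real.sqrt (P.rnDeriv ν x).toReal - Real.sqrt (Q.rnDeriv ν x).toReal) ^ 2) ν := by
    refine hgi.mono' hfm (Filter.Eventually.of_forall fun x => ?_)
    rw [Real.norm_eq_abs, abs_of_nonneg (sq_nonneg _)]
    exact hle x
  have hmono : sqHellinger P Q ≤ ∫ x, ((P.rnDeriv ν x).toReal + (Q.rnDeriv ν x).toReal) ∂ν :=
    integral_mono hfi hgi hle
  calc sqHellinger P Q ≤ _ := hmono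
    _ = 2 := by
        rw [integral_add hPi hQi, Measure.integral_toReal_rnDeriv hP,
          Measure.integral_toReal_rnDeriv hQ]
        norm_num

lemma abs_meanReward_le {X O : Type*} [MeasurableSpace O] (r : O → ℝ) {C : ℝ}
    (hC : ∀ o, |r o| ≤ C) (M : X → Measure O) (x : X) [IsProbabilityMeasure (M x)] :
    |meanReward r M x| ≤ C := by
  have h := norm_integral_le_of_norm_le_const (μ := M x) (f := r) (C := C)
    (Filter.Eventually.of_forall fun o => by simpa using hC o)
  simpa [meanReward, measure_univ] using h

/-! ### Weighted-sum helper lemmas -/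

lemma wsum_abs_le {Z : Type*} (s : Finset Z) (w : Z → ℝ) (hw : ∀ z, 0 ≤ w z)
    (h1 : ∑ z ∈ s, w z = 1) (g : Z → ℝ) {Cb : ℝ} (hg : ∀ z ∈ s, |g z| ≤ Cb) :
    |∑ z ∈ s, w z * g z| ≤ Cb := by
  calc |∑ z ∈ s, w z * g z| ≤ ∑ z ∈ s, |w z * g z| := Finset.abs_sum_le_sum_abs _ _
    _ = ∑ z ∈ s, w z * |g z| := by
        refine Finset.sum_congr rfl fun z _ => ?_
        rw [abs_mul, abs_of_nonneg (hw z)]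
    _ ≤ ∑ z ∈ s, w z * Cb :=
        Finset.sum_le_sum fun z hz => mul_le_mul_of_nonneg_left (hg z hz) (hw z)
    _ = Cb := by rw [← Finset.sum_mul, h1, one_mul]

lemma wsum_le {Z : Type*} (s : Finset Z) (w : Z → ℝ) (hw : ∀ z, 0 ≤ w z)
    (h1 : ∑ z ∈ s, w z = 1) (g : Z → ℝ) {S : ℝ} (hg : ∀ z ∈ s, g z ≤ S) :
    ∑ z ∈ s, w z * g z ≤ S := by
  calc ∑ z ∈ s, w z * g z ≤ ∑ z ∈ s, w z * S :=
        Finset.sum_le_sum fun z hz => mul_le_mul_of_nonneg_left (hg z hz) (hw z)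
    _ = S := by rw [← Finset.sum_mul, h1, one_mul]

lemma le_wsum {Z : Type*} (s : Finset Z) (w : Z → ℝ) (hw : ∀ z, 0 ≤ w z)
    (h1 : ∑ z ∈ s, w z = 1) (g : Z → ℝ) {S : ℝ} (hg : ∀ z ∈ s, S ≤ g z) :
    S ≤ ∑ z ∈ s, w z * g z := by
  calc S = ∑ z ∈ s, w z * S := by rw [← Finset.sum_mul, h1, one_mul]
    _ ≤ ∑ z ∈ s, w z * g z :=
        Finset.sum_le_sum fun z hz => mul_le_mul_of_nonneg_left (hg z hz) (hw z)

/-! ### FinDist constructions -/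

def payF {X : Type*} [Fintype X] (p v : X → ℝ) : ℝ := ∑ x, p x * v x

def baryF {X Z : Type*} [Fintype X] (L : Z → X → ℝ) (μ : FinDist Z) : X → ℝ :=
  fun x => ∑ z ∈ μ.support, μ.w z * L z x

def FinDist.dirac {Z : Type*} [DecidableEq Z] (z : Z) : FinDist Z where
  support := {z}
  w := fun z' => if z' = z then 1 else 0
  nonneg := fun z' => by by_cases h : z' = z <;> simp [h]
  zero_of_not_mem := fun z' hz' => if_neg (by simpa using hz')
  sum_eq_one := by simp

lemma baryF_dirac {X Z : Type*} [Fintype X] [DecidableEq Z] (L : Z → X → ℝ) (z : Z) :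
    baryF L (FinDist.dirac z) = L z := funext fun x => by
  simp [baryF, FinDist.dirac]

def FinDist.mix {Z : Type*} [DecidableEq Z] (a b : ℝ) (ha : 0 ≤ a) (hb : 0 ≤ b)
    (hab : a + b = 1) (μ ν : FinDist Z) : FinDist Z where
  support := μ.support ∪ ν.support
  w := fun z => a * μ.w z + b * ν.w z
  nonneg := fun z => add_nonneg (mul_nonneg ha (μ.nonneg z)) (mul_nonneg hb (ν.nonneg z))
  zero_of_not_mem := fun z hz => by
    show a * μ.w z + b * ν.w z = 0
    rw [μ.zero_of_not_mem z (fun h => hz (Finset.mem_union_left _ h)),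
        ν.zero_of_not_mem z (fun h => hz (Finset.mem_union_right _ h))]
    ring
  sum_eq_one := by
    have hμ : ∑ z ∈ μ.support ∪ ν.support, μ.w z = 1 := by
      rw [← μ.sum_eq_one]
      exact (Finset.sum_subset Finset.subset_union_left
        (fun z _ hz => μ.zero_of_not_mem z hz)).symm
    have hν : ∑ z ∈ μ.support ∪ ν.support, ν.w z = 1 := by
      rw [← ν.sum_eq_one]
      exact (Finset.sum_subset Finset.subset_union_right
        (fun z _ hz => ν.zero_of_not_mem z hz)).symm
    rw [Finset.sum_add_distrib, ← Finset.mul_sum, ← Finset.mul_sum, hμ, hν, mul_one, mul_one, hab]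

lemma baryF_mix {X Z : Type*} [Fintype X] [DecidableEq Z] (L : Z → X → ℝ) (a b : ℝ)
    (ha : 0 ≤ a) (hb : 0 ≤ b) (hab : a + b = 1) (μ ν : FinDist Z) :
    baryF L (FinDist.mix a b ha hb hab μ ν) = a • baryF L μ + b • baryF L ν := by
  funext x
  simp only [baryF, FinDist.mix, Pi.add_apply, Pi.smul_apply, smul_eq_mul]
  have hμ : ∑ z ∈ μ.support ∪ ν.support, μ.w z * L z x = ∑ z ∈ μ.support, μ.w z * L z x :=
    (Finset.sum_subset Finset.subset_union_left
      (fun z _ hz => by rw [μ.zero_of_not_mem z hz, zero_mul])).symm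
  have hν : ∑ z ∈ μ.support ∪ ν.support, ν.w z * L z x = ∑ z ∈ ν.support, ν.w z * L z x :=
    (Finset.sum_subset Finset.subset_union_right
      (fun z _ hz => by rw [ν.zero_of_not_mem z hz, zero_mul])).symm
  calc ∑ z ∈ μ.support ∪ ν.support, (a * μ.w z + b * ν.w z) * L z x
      = a * ∑ z ∈ μ.support ∪ ν.support, μ.w z * L z x
        + b * ∑ z ∈ μ.support ∪ ν.support, ν.w z * L z x := by
        rw [Finset.mul_sum, Finset.mul_sum, ← Finset.sum_add_distrib]
        refine Finset.sum_congr rfl fun z _ => by ring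
    _ = a * ∑ z ∈ μ.support, μ.w z * L z x + b * ∑ z ∈ ν.support, ν.w z * L z x := by
        rw [hμ, hν]

/-! ### The abstract minimax theorem -/

theorem minimax_findist {X : Type*} [Fintype X] [Nonempty X] {Z : Type*} [Nonempty Z]
    (L : Z → X → ℝ) {Cb : ℝ} (hCb : 0 ≤ Cb) (hL : ∀ z x, |L z x| ≤ Cb) :
    (⨅ p : {p : X → ℝ // (∀ x, 0 ≤ p x) ∧ (∑ x, p x) = 1},
        ⨆ z : Z, ∑ x, p.1 x * L z x) =
      ⨆ μ : FinDist Z, ⨅ p : {p : X → ℝ // (∀ x, 0 ≤ p x) ∧ (∑ x, p x) = 1},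
        ∑ x, p.1 x * ∑ z ∈ μ.support, μ.w z * L z x := by
  classical
  obtain ⟨z₀⟩ := ‹Nonempty Z›
  haveI hFDne : Nonempty (FinDist Z) := ⟨FinDist.dirac z₀⟩
  haveI hΔne : Nonempty {p : X → ℝ // (∀ x, 0 ≤ p x) ∧ (∑ x, p x) = 1} := by
    refine ⟨⟨fun _ => (Fintype.card X : ℝ)⁻¹, fun x => by positivity, ?_⟩⟩
    rw [Finset.sum_const, Finset.card_univ, nsmul_eq_mul, mul_inv_cancel₀]
    exact_mod_cast Fintype.card_ne_zero
  show (⨅ p : {p : X → ℝ // (∀ x, 0 ≤ p x) ∧ (∑ x, p x) = 1},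
        ⨆ z : Z, payF p.1 (L z)) =
      ⨆ μ : FinDist Z, ⨅ p : {p : X → ℝ // (∀ x, 0 ≤ p x) ∧ (∑ x, p x) = 1},
        payF p.1 (baryF L μ)
  -- basic bounds
  have hpayL : ∀ (p : {p : X → ℝ // (∀ x, 0 ≤ p x) ∧ (∑ x, p x) = 1}) (z : Z),
      |payF p.1 (L z)| ≤ Cb := fun p z =>
    wsum_abs_le Finset.univ p.1 p.2.1 p.2.2 (fun x => L z x) (fun x _ => hL z x)
  have hbaryb : ∀ (μ : FinDist Z) (x : X), |baryF L μ x| ≤ Cb := fun μ x =>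
    wsum_abs_le μ.support μ.w μ.nonneg μ.sum_eq_one (fun z => L z x) (fun z _ => hL z x)
  have hpayBary : ∀ (p : {p : X → ℝ // (∀ x, 0 ≤ p x) ∧ (∑ x, p x) = 1}) (μ : FinDist Z),
      |payF p.1 (baryF L μ)| ≤ Cb := fun p μ =>
    wsum_abs_le Finset.univ p.1 p.2.1 p.2.2 (fun x => baryF L μ x) (fun x _ => hbaryb μ x)
  have hbddA : ∀ p : {p : X → ℝ // (∀ x, 0 ≤ p x) ∧ (∑ x, p x) = 1},
      BddAbove (Set.range fun z : Z => payF p.1 (L z)) := fun p =>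
    ⟨Cb, by rintro _ ⟨z, rfl⟩; exact (abs_le.1 (hpayL p z)).2⟩
  have hbddB : BddBelow (Set.range fun p : {p : X → ℝ // (∀ x, 0 ≤ p x) ∧ (∑ x, p x) = 1} =>
      ⨆ z : Z, payF p.1 (L z)) := by
    refine ⟨-Cb, ?_⟩
    rintro _ ⟨p, rfl⟩
    exact le_trans (abs_le.1 (hpayL p z₀)).1 (le_ciSup (hbddA p) z₀)
  have hbddPayBary : ∀ μ : FinDist Z,
      BddBelow (Set.range fun p : {p : X → ℝ // (∀ x, 0 ≤ p x) ∧ (∑ x, p x) = 1} =>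
        payF p.1 (baryF L μ)) := fun μ =>
    ⟨-Cb, by rintro _ ⟨p, rfl⟩; exact (abs_le.1 (hpayBary p μ)).1⟩
  have hbddC : BddAbove (Set.range fun μ : FinDist Z =>
      ⨅ p : {p : X → ℝ // (∀ x, 0 ≤ p x) ∧ (∑ x, p x) = 1}, payF p.1 (baryF L μ)) := by
    refine ⟨Cb, ?_⟩
    rintro _ ⟨μ, rfl⟩
    exact le_trans (ciInf_le (hbddPayBary μ) (Classical.arbitrary _))
      (abs_le.1 (hpayBary _ μ)).2
  refine le_antisymm ?_ ?_
  · -- hard direction: LHS ≤ RHS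
    refine le_of_forall_pos_le_add fun ε hε => ?_
    set c : ℝ := ⨆ μ : FinDist Z, ⨅ p : {p : X → ℝ // (∀ x, 0 ≤ p x) ∧ (∑ x, p x) = 1},
      payF p.1 (baryF L μ) with hc
    set Bs : Set (X → ℝ) := Set.range (baryF L) with hBs
    have hBconv : Convex ℝ Bs := by
      rintro _ ⟨μ, rfl⟩ _ ⟨ν, rfl⟩ a b ha hb hab
      exact ⟨FinDist.mix a b ha hb hab μ ν, baryF_mix L a b ha hb hab μ ν⟩
    have hKconv : Convex ℝ (closure Bs) := hBconv.closure
    have hKcomp : IsCompact (closure Bs) := by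
      refine Metric.isCompact_of_isClosed_isBounded isClosed_closure ?_
      have hsub : Bs ⊆ Metric.closedBall 0 Cb := by
        rintro _ ⟨μ, rfl⟩
        rw [Metric.mem_closedBall, dist_zero_right, pi_norm_le_iff_of_nonneg hCb]
        intro x
        rw [Real.norm_eq_abs]
        exact hbaryb μ x
      exact (Metric.isBounded_closedBall.subset hsub).closure
    have hXne : (Finset.univ : Finset X).Nonempty := Finset.univ_nonempty
    have hclaimB : ∀ v ∈ Bs, Finset.univ.inf' hXne (fun x => v x) ≤ c := by
      rintro _ ⟨μ, rfl⟩
      refine le_trans ?_ (le_ciSup hbddC μ)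
      refine le_ciInf fun p => ?_
      exact le_wsum Finset.univ p.1 p.2.1 p.2.2 (fun x => baryF L μ x)
        (fun x _ => Finset.inf'_le _ (Finset.mem_univ x))
    have hmincont : Continuous (fun v : X → ℝ => Finset.univ.inf' hXne (fun x => v x)) :=
      Continuous.finset_inf'_apply hXne fun x _ => continuous_apply x
    have hclaimK : ∀ v ∈ closure Bs, Finset.univ.inf' hXne (fun x => v x) ≤ c := by
      have hsub : closure Bs ⊆
          (fun v : X → ℝ => Finset.univ.inf' hXne (fun x => v x)) ⁻¹' Set.Iic c :=
        closure_minimal (fun v hv => hclaimB v hv) (isClosed_Iic.preimage hmincont)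
      exact fun v hv => hsub hv
    set T : Set (X → ℝ) := {w | ∀ x, c + ε ≤ w x} with hT
    have hTclosed : IsClosed T := by
      have hTeq : T = ⋂ x, (fun w : X → ℝ => w x) ⁻¹' Set.Ici (c + ε) := by
        ext w
        simp [hT, Set.mem_iInter]
      rw [hTeq]
      exact isClosed_iInter fun x => isClosed_Ici.preimage (continuous_apply x)
    have hTconv : Convex ℝ T := by
      intro u hu w hw a b ha hb hab
      intro x
      have h1 := hu x
      have h2 := hw x
      simp only [Pi.add_apply, Pi.smul_apply, smul_eq_mul]
      have h3 : a * (c + ε) + b * (c + ε) ≤ a * u x + b * w x :=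
        add_le_add (mul_le_mul_of_nonneg_left h1 ha) (mul_le_mul_of_nonneg_left h2 hb)
      have h4 : a * (c + ε) + b * (c + ε) = c + ε := by rw [← add_mul, hab, one_mul]
      linarith
    have hdisj : Disjoint (closure Bs) T := by
      rw [Set.disjoint_left]
      intro v hvK hvT
      have h1 := hclaimK v hvK
      have h2 : c + ε ≤ Finset.univ.inf' hXne (fun x => v x) :=
        Finset.le_inf' _ _ fun x _ => hvT x
      linarith
    obtain ⟨f, u₁, u₂, hfK, hu, hfT⟩ :=
      geometric_hahn_banach_compact_closed hKconv hKcomp hTconv hTclosed hdisj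
    set q : X → ℝ := fun x => f (Pi.single x 1 : X → ℝ) with hq
    have hrepr : ∀ w : X → ℝ, f w = ∑ x, w x * q x := by
      intro w
      have hw : w = ∑ x, Pi.single x (w x) := (Finset.univ_sum_single w).symm
      calc f w = f (∑ x, Pi.single x (w x)) := by rw [← hw]
        _ = ∑ x, f (Pi.single x (w x)) := map_sum f _ _
        _ = ∑ x, w x * q x := by
            refine Finset.sum_congr rfl fun x _ => ?_
            have hsingle : Pi.single x (w x) = w x • (Pi.single x 1 : X → ℝ) := by
              funext y
              by_cases h : y = x <;> simp [Pi.single_apply, h]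
            rw [hsingle, f.map_smul, smul_eq_mul]
    have hconstT : (fun _ : X => c + ε) ∈ T := fun x => le_rfl
    have hfconst := hfT _ hconstT
    have hqnn : ∀ x, 0 ≤ q x := by
      intro x
      by_contra hqx
      push_neg at hqx
      set t : ℝ := (f (fun _ : X => c + ε) - u₂ + 1) / (-q x) with ht
      have ht0 : 0 ≤ t := div_nonneg (by linarith) (by linarith)
      have hmem : ((fun _ : X => c + ε) + t • (Pi.single x 1 : X → ℝ)) ∈ T := by
        intro y
        simp only [Pi.add_apply, Pi.smul_apply, smul_eq_mul]
        have hnn : (0:ℝ) ≤ t * (Pi.single x 1 : X → ℝ) y := by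
          by_cases h : y = x <;> simp [Pi.single_apply, h, ht0]
        linarith
      have hlt := hfT _ hmem
      rw [map_add, f.map_smul, smul_eq_mul] at hlt
      have hqne : q x ≠ 0 := ne_of_lt hqx
      have htq : t * q x = -(f (fun _ : X => c + ε) - u₂ + 1) := by
        rw [ht, div_mul_eq_mul_div, mul_div_assoc, div_neg, div_self hqne]
        ring
      rw [htq] at hlt
      linarith
    have hK_mem : ∀ z : Z, L z ∈ closure Bs := fun z =>
      subset_closure ⟨FinDist.dirac z, baryF_dirac L z⟩
    have hfz : ∀ z : Z, f (L z) < u₁ := fun z => hfK _ (hK_mem z)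
    set S : ℝ := ∑ x, q x with hS
    have hS0 : 0 < S := by
      rcases lt_or_eq_of_le (Finset.sum_nonneg fun x _ => hqnn x) with h | h
      · exact h
      · exfalso
        have hq0 : ∀ x, q x = 0 := fun x =>
          (Finset.sum_eq_zero_iff_of_nonneg (fun x _ => hqnn x)).1 h.symm x (Finset.mem_univ x)
        have hf0 : ∀ w : X → ℝ, f w = 0 := fun w => by
          rw [hrepr w]
          simp [hq0]
        have h1 := hfz z₀
        have h2 := hfconst
        rw [hf0] at h1
        rw [hf0] at h2
        linarith
    set p₁ : {p : X → ℝ // (∀ x, 0 ≤ p x) ∧ (∑ x, p x) = 1} :=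
      ⟨fun x => q x / S, fun x => div_nonneg (hqnn x) hS0.le,
        by rw [← Finset.sum_div, ← hS, div_self hS0.ne']⟩ with hp₁
    have hfconst_val : f (fun _ : X => c + ε) = (c + ε) * S := by
      rw [hrepr, hS, Finset.mul_sum]
    have key : ∀ z : Z, payF p₁.1 (L z) ≤ c + ε := by
      intro z
      have h1 : f (L z) < (c + ε) * S :=
        lt_trans (hfz z) (lt_trans hu (by rw [← hfconst_val]; exact hfconst))
      have h2 : payF p₁.1 (L z) = f (L z) / S := by
        rw [hrepr]
        simp only [payF, hp₁]
        rw [Finset.sum_div]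
        refine Finset.sum_congr rfl fun x _ => ?_
        field_simp
      rw [h2, div_le_iff₀ hS0]
      linarith
    calc (⨅ p : {p : X → ℝ // (∀ x, 0 ≤ p x) ∧ (∑ x, p x) = 1},
          ⨆ z : Z, payF p.1 (L z)) ≤ ⨆ z : Z, payF p₁.1 (L z) := ciInf_le hbddB p₁
      _ ≤ c + ε := ciSup_le key
  · -- easy direction: RHS ≤ LHS
    refine ciSup_le fun μ => ?_
    refine ciInf_mono (hbddPayBary μ) fun p => ?_
    have hswap : payF p.1 (baryF L μ) = ∑ z ∈ μ.support, μ.w z * payF p.1 (L z) := by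
      simp only [payF, baryF, Finset.mul_sum]
      rw [Finset.sum_comm]
      refine Finset.sum_congr rfl fun z _ => ?_
      refine Finset.sum_congr rfl fun x _ => by ring
    rw [hswap]
    exact wsum_le _ _ μ.nonneg μ.sum_eq_one _ fun z _ => le_ciSup (hbddA p) z

/-! ### Main theorem -/

/-- minimax swap for the Decision-Estimation Coefficient over a
finite decision space: the (primal) DEC equals its dual Bayesian version, where
`p` ranges over probability distributions on the finite decision space and `μ`
ranges over finitely supported priors on the model class. -/
theorem dec_minimax_swap {X O : Type*} [Fintype X] [Nonempty X] [MeasurableSpace O]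
    (r : O → ℝ) (hr_meas : Measurable r) (hr_bdd : ∃ C : ℝ, ∀ o, |r o| ≤ C)
    (𝔐 : Set (X → Measure O)) (h_ne : 𝔐.Nonempty)
    (h_prob : ∀ M ∈ 𝔐, ∀ x, IsProbabilityMeasure (M x))
    (Mbar : X → Measure O) (hMbar : ∀ x, IsProbabilityMeasure (Mbar x))
    (piOf : (X → Measure O) → X)
    (h_max : ∀ M ∈ 𝔐, ∀ x, meanReward r M x ≤ meanReward r M (piOf M))
    (γ : ℝ) (hγ : 0 < γ) :
    (⨅ p : {p : X → ℝ // (∀ x, 0 ≤ p x) ∧ (∑ x, p x) = 1},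
        ⨆ M : 𝔐, ∑ x, p.1 x *
          (meanReward r M.1 (piOf M.1) - meanReward r M.1 x -
            γ * sqHellinger (M.1 x) (Mbar x))) =
      ⨆ μ : FinDist 𝔐, ⨅ p : {p : X → ℝ // (∀ x, 0 ≤ p x) ∧ (∑ x, p x) = 1},
        ∑ x, p.1 x * ∑ M ∈ μ.support, μ.w M *
          (meanReward r M.1 (piOf M.1) - meanReward r M.1 x -
            γ * sqHellinger (M.1 x) (Mbar x)) := by
  classical
  obtain ⟨C₀, hC₀⟩ := hr_bdd
  have hC : ∀ o, |r o| ≤ |C₀| := fun o => (hC₀ o).trans (le_abs_self C₀)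
  haveI : Nonempty ↥𝔐 := h_ne.to_subtype
  refine minimax_findist (fun (M : ↥𝔐) (x : X) =>
    meanReward r M.1 (piOf M.1) - meanReward r M.1 x - γ * sqHellinger (M.1 x) (Mbar x))
    (Cb := 2 * |C₀| + 2 * γ) (by positivity) ?_
  intro M x
  haveI h1 := h_prob M.1 M.2 x
  haveI h2 := h_prob M.1 M.2 (piOf M.1)
  haveI h3 := hMbar x
  have ha := abs_meanReward_le r hC M.1 (piOf M.1)
  have hb := abs_meanReward_le r hC M.1 x
  have hs1 := sqHellinger_nonneg (M.1 x) (Mbar x)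
  have hs2 := sqHellinger_le_two (M.1 x) (Mbar x)
  show |meanReward r M.1 (piOf M.1) - meanReward r M.1 x -
      γ * sqHellinger (M.1 x) (Mbar x)| ≤ 2 * |C₀| + 2 * γ
  rw [abs_le] at ha hb ⊢
  constructor <;>
    nlinarith [mul_le_mul_of_nonneg_left hs2 hγ.le, mul_nonneg hγ.le hs1]
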